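/- Let W be the symmetric group S_{n+1} (type A_n Weyl group), w ∈ W, and let N(w⁻¹) = {α_{i₁j₁},…,α_{i_kj_k}} be the inversion set of w⁻¹. Then the number of antichains in the root poset of type A_n that avoid all elements of N(w⁻¹) equals the determinant of the (k+1)×(k+1) matrix whose (r,s) entry for r,s ≤ k is 1 if r = s and otherwise the number of weakly-above-diagonal north-east lattice paths from (i_s, j_s+1) to (i_r−1, j_r), whose last column entries are the path counts from (0,1) to (i_r−1, j_r), and whose last row entries are the path counts from (i_s, j_s+1) to (n, n+1), with bottom-right entry the path count from (0,1) to (n,n+1). -/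

import Mathlib

/-- A north-east unit step in the integer lattice. -/
def NEStep (p q : ℤ × ℤ) : Prop :=
  q = (p.1 + 1, p.2) ∨ q = (p.1, p.2 + 1)

/-- A north-east lattice path from `a` to `b` staying weakly above the diagonal `x = y`,
represented as its (nonempty) list of lattice points. -/
def IsNEPathAbove (a b : ℤ × ℤ) (l : List (ℤ × ℤ)) : Prop :=
  l.head? = some a ∧ l.getLast? = some b ∧ l.Chain' NEStep ∧ ∀ p ∈ l, p.1 ≤ p.2

/-- The number of north-east lattice paths from `a` to `b` weakly above the diagonal. -/
noncomputable def latticeCount (a b : ℤ × ℤ) : ℕ :=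
  Set.ncard {l : List (ℤ × ℤ) | IsNEPathAbove a b l}

/-- The binomial coefficient `C(n, k)` for integers, equal to `0` if `k < 0` or `k > n`. -/
def intChoose (n k : ℤ) : ℕ :=
  if 0 ≤ k ∧ k ≤ n then n.toNat.choose k.toNat else 0

/-- `p = (i, j)` encodes the positive root `α_{ij} = α_i + ⋯ + α_j` of type `Aₙ`. -/
def IsRootA (n : ℕ) (p : ℕ × ℕ) : Prop :=
  1 ≤ p.1 ∧ p.1 ≤ p.2 ∧ p.2 ≤ n

/-- The root poset order of type `A`: `α_{ij} ≤ α_{kl}` iff `k ≤ i` and `j ≤ l`. -/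
def rootLeA (p q : ℕ × ℕ) : Prop :=
  q.1 ≤ p.1 ∧ p.2 ≤ q.2

namespace S8

lemma chain_mono : ∀ (l : List (ℤ × ℤ)), l.Chain' NEStep → ∀ a b, l.head? = some a →
    l.getLast? = some b → a.1 ≤ b.1 ∧ a.2 ≤ b.2 ∧ (l.length : ℤ) = b.1 + b.2 - a.1 - a.2 + 1
  | [], _, a, b, h, _ => by simp at h
  | [x], _, a, b, h, h' => by
      simp at h h'; subst h h'; simp
  | x :: y :: t, hc, a, b, h, h' => by
      unfold List.Chain' at hc
      rw [List.isChain_cons_cons] at hc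
      have ih := chain_mono (y :: t) hc.2 y b rfl (by rw [← h']; rfl)
      simp only [List.head?_cons, Option.some.injEq] at h
      subst h
      have hy : (y.1 + y.2 = x.1 + x.2 + 1) ∧ x.1 ≤ y.1 ∧ x.2 ≤ y.2 := by
        rcases hc.1 with h1 | h1 <;> (subst h1; refine ⟨?_, ?_, ?_⟩ <;> simp <;> try omega)
      obtain ⟨m1, m2, m3⟩ := ih
      refine ⟨by omega, by omega, ?_⟩
      simp only [List.length_cons] at m3 ⊢
      push_cast at m3 ⊢
      omega

lemma path_mono {a b l} (h : IsNEPathAbove a b l) :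
    a.1 ≤ b.1 ∧ a.2 ≤ b.2 ∧ (l.length : ℤ) = b.1 + b.2 - a.1 - a.2 + 1 :=
  chain_mono l h.2.2.1 a b h.1 h.2.1

lemma path_self {a l} (h : IsNEPathAbove a a l) : l = [a] := by
  have := (path_mono h).2.2
  have hl : l.length = 1 := by omega
  match l, hl with
  | [x], _ =>
    have := h.1; simp at this; rw [this]

lemma path_step {a b : ℤ × ℤ} (hne : a ≠ b) (hd : a.1 ≤ a.2) :
    {l | IsNEPathAbove a b l} =
      (List.cons a) '' ({l | IsNEPathAbove (a.1 + 1, a.2) b l} ∪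
        {l | IsNEPathAbove (a.1, a.2 + 1) b l}) := by
  ext l
  constructor
  · rintro ⟨h1, h2, h3, h4⟩
    match l with
    | [] => simp at h1
    | [x] =>
      simp at h1 h2; exact absurd (h1.symm.trans h2) hne
    | x :: y :: t =>
      simp only [List.head?_cons, Option.some.injEq] at h1; subst h1
      unfold List.Chain' at h3
      rw [List.isChain_cons_cons] at h3
      refine ⟨y :: t, ?_, rfl⟩
      have hy : IsNEPathAbove y b (y :: t) :=
        ⟨rfl, by rw [← h2]; rfl, h3.2, fun p hp => h4 p (List.mem_cons_of_mem _ hp)⟩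
      rcases h3.1 with h | h
      · left; rw [← h]; exact hy
      · right; rw [← h]; exact hy
  · rintro ⟨t, ht, rfl⟩
    have ht' : IsNEPathAbove (a.1 + 1, a.2) b t ∨ IsNEPathAbove (a.1, a.2 + 1) b t := ht
    have key : ∀ c, IsNEPathAbove c b t → NEStep a c → IsNEPathAbove a b (a :: t) := by
      rintro c ⟨h1, h2, h3, h4⟩ hs
      have htne : t ≠ [] := by rintro rfl; simp at h1
      refine ⟨rfl, ?_, ?_, ?_⟩
      · obtain ⟨c', t', rfl⟩ := List.exists_cons_of_ne_nil htne
        rw [List.getLast?_cons_cons]; exact h2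
      · unfold List.Chain'
        rw [List.isChain_cons]
        refine ⟨fun y hy => ?_, h3⟩
        rw [h1] at hy; simp at hy; subst hy; exact hs
      · intro p hp
        rcases List.mem_cons.1 hp with rfl | hp
        · exact hd
        · exact h4 p hp
    rcases ht' with h | h
    · exact key _ h (Or.inl rfl)
    · exact key _ h (Or.inr rfl)

lemma path_finite (a b : ℤ × ℤ) : {l | IsNEPathAbove a b l}.Finite := by
  have main : ∀ N a b, (b.1 + b.2 - a.1 - a.2).toNat ≤ N → {l | IsNEPathAbove a b l}.Finite := by
    intro N
    induction N with
    | zero =>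
      intro a b hN
      by_cases hab : a = b
      · subst hab
        exact Set.Finite.subset (Set.finite_singleton [a]) (fun l hl => path_self hl)
      · refine Set.finite_empty.subset fun l hl => hab ?_
        have := path_mono hl
        have hlen := hl.1
        -- length ≥ 1, so b.1+b.2-a.1-a.2 ≥ 0; with toNat ≤ 0 forces = 0 and a ≤ b comp.
        exact Prod.ext (by omega) (by omega)
    | succ N ih =>
      intro a b hN
      by_cases hab : a = b
      · subst hab
        exact Set.Finite.subset (Set.finite_singleton [a]) (fun l hl => path_self hl)
      by_cases hd : a.1 ≤ a.2
      · rw [path_step hab hd]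
        apply Set.Finite.image
        apply Set.Finite.union <;> refine ih _ _ ?_ <;> simp <;> omega
      · refine Set.finite_empty.subset fun l hl => hd ?_
        have h1 := hl.1
        have hmem : a ∈ l := by
          match l, h1 with
          | x :: t, h1 => simp at h1; subst h1; exact List.mem_cons_self
        exact hl.2.2.2 a hmem
  exact main _ a b le_rfl

lemma lc_zero_diag {a b : ℤ × ℤ} (h : a.2 < a.1) : latticeCount a b = 0 := by
  rw [latticeCount, Set.ncard_eq_zero (path_finite a b)]
  ext l; simp only [Set.mem_setOf_eq, Set.mem_empty_iff_false, iff_false]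
  intro hl
  have h1 := hl.1
  have hmem : a ∈ l := by
    match l, h1 with
    | x :: t, h1 => simp at h1; subst h1; exact List.mem_cons_self
  exact absurd (hl.2.2.2 a hmem) (by omega)

lemma lc_zero {a b : ℤ × ℤ} (h : b.1 < a.1 ∨ b.2 < a.2) : latticeCount a b = 0 := by
  rw [latticeCount, Set.ncard_eq_zero (path_finite a b)]
  ext l; simp only [Set.mem_setOf_eq, Set.mem_empty_iff_false, iff_false]
  intro hl
  have := path_mono hl
  omega

lemma lc_self {a : ℤ × ℤ} (h : a.1 ≤ a.2) : latticeCount a a = 1 := by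
  rw [latticeCount]
  have : {l | IsNEPathAbove a a l} = {[a]} := by
    ext l
    simp only [Set.mem_setOf_eq, Set.mem_singleton_iff]
    constructor
    · exact path_self
    · rintro rfl
      exact ⟨rfl, rfl, List.isChain_singleton _, by simpa using h⟩
  rw [this, Set.ncard_singleton]

lemma lc_rec {a b : ℤ × ℤ} (hne : a ≠ b) (hd : a.1 ≤ a.2) :
    latticeCount a b = latticeCount (a.1 + 1, a.2) b + latticeCount (a.1, a.2 + 1) b := by
  rw [latticeCount, path_step hne hd,
    Set.ncard_image_of_injective _ (fun x y h => by injection h)]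
  rw [Set.ncard_union_eq ?_ (path_finite _ _) (path_finite _ _)]
  · rfl
  · rw [Set.disjoint_iff_inter_eq_empty]
    ext l
    simp only [Set.mem_inter_iff, Set.mem_setOf_eq, Set.mem_empty_iff_false, iff_false, not_and]
    intro h1 h2
    have e1 := h1.1; have e2 := h2.1
    rw [e1] at e2
    simp at e2

end S8

namespace S8

lemma lc_hor : ∀ (N : ℕ) (x z y : ℤ), (z - x).toNat = N → x ≤ z → z ≤ y →
    latticeCount (x, y) (z, y) = 1 := by
  intro N
  induction N with
  | zero =>
    intro x z y hN hxz hzy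
    have : x = z := by omega
    subst this
    exact lc_self (by simpa using hzy)
  | succ N ih =>
    intro x z y hN hxz hzy
    have hxz' : x < z := by omega
    rw [lc_rec (by simp; omega) (by simp; omega)]
    have h2 : latticeCount ((x, y).1, (x, y).2 + 1) (z, y) = 0 := lc_zero (by simp)
    have h1 := ih (x + 1) z y (by omega) (by omega) hzy
    simp only [Prod.fst, Prod.snd] at *
    rw [h2]
    simpa using h1

lemma lc_ver : ∀ (N : ℕ) (x y d : ℤ), (d - y).toNat = N → x ≤ y → y ≤ d →
    latticeCount (x, y) (x, d) = 1 := by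
  intro N
  induction N with
  | zero =>
    intro x y d hN hxy hyd
    have : y = d := by omega
    subst this
    exact lc_self (by simpa using hxy)
  | succ N ih =>
    intro x y d hN hxy hyd
    have hyd' : y < d := by omega
    rw [lc_rec (by simp; omega) (by simpa using hxy)]
    have h1 : latticeCount ((x, y).1 + 1, (x, y).2) (x, d) = 0 := lc_zero (by simp)
    have h2 := ih x (y + 1) d (by omega) (by omega) (by omega)
    rw [h1]
    simpa using h2

/-- unrolling the first row of E-steps -/
lemma lc_unroll : ∀ (N : ℕ) (x z : ℕ) (y d : ℤ), z - x = N → x ≤ z → y < d →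
    latticeCount ((x : ℤ), y) ((z : ℤ), d) =
      ∑ i ∈ Finset.Icc x z, if (i : ℤ) ≤ y then latticeCount ((i : ℤ), y + 1) ((z : ℤ), d) else 0 := by
  intro N
  induction N with
  | zero =>
    intro x z y d hN hxz hyd
    have : x = z := by omega
    subst this
    rw [Finset.Icc_self, Finset.sum_singleton]
    by_cases hc : (x : ℤ) ≤ y
    · rw [if_pos hc, lc_rec (by simp; omega) (by simpa using hc)]
      have h1 : latticeCount (((x:ℤ), y).1 + 1, ((x:ℤ), y).2) ((x:ℤ), d) = 0 := lc_zero (by simp)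
      rw [h1]
      simp
    · rw [if_neg hc, lc_zero_diag (by simp; omega)]
  | succ N ih =>
    intro x z y d hN hxz hyd
    have hxz' : x < z := by omega
    by_cases hc : (x : ℤ) ≤ y
    · rw [lc_rec (by simp; intro h; omega) (by simpa using hc)]
      have e1 : (((x:ℤ), y).1 + 1, ((x:ℤ), y).2) = (((x + 1 : ℕ) : ℤ), y) := by simp [Prod.ext_iff]
      rw [e1, ih (x+1) z y d (by omega) (by omega) hyd]
      have hsplit : Finset.Icc x z = insert x (Finset.Icc (x+1) z) := by
        ext i; simp [Finset.mem_Icc, Finset.mem_insert]; omega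
      rw [hsplit, Finset.sum_insert (by simp)]
      rw [if_pos hc]
      ring
    · -- x > y: both sides zero
      rw [lc_zero_diag (by simp; omega)]
      symm
      apply Finset.sum_eq_zero
      intro i hi
      rw [if_neg]
      simp only [Finset.mem_Icc] at hi
      omega

end S8

namespace S8

def regionF (x y c d : ℕ) : Finset (ℕ × ℕ) :=
  (Finset.Ioo x c ×ˢ Finset.Ico y d).filter fun p => p.1 ≤ p.2

open scoped Classical in
noncomputable def acF (x y c d : ℕ) (S : Finset (ℕ × ℕ)) : Finset (Finset (ℕ × ℕ)) :=
  (regionF x y c d).powerset.filter fun A =>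
    IsAntichain rootLeA (A : Set (ℕ × ℕ)) ∧ ∀ p ∈ S, p ∉ A

lemma mem_regionF {x y c d : ℕ} {p : ℕ × ℕ} :
    p ∈ regionF x y c d ↔ x < p.1 ∧ p.1 < c ∧ y ≤ p.2 ∧ p.2 < d ∧ p.1 ≤ p.2 := by
  simp [regionF, Finset.mem_filter, Finset.mem_product]; tauto

lemma mem_acF {x y c d : ℕ} {S A} :
    A ∈ acF x y c d S ↔ (∀ p ∈ A, p ∈ regionF x y c d) ∧
      IsAntichain rootLeA (A : Set (ℕ × ℕ)) ∧ ∀ p ∈ S, p ∉ A := by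
  rw [acF]
  simp only [Finset.mem_filter, Finset.mem_powerset, Finset.subset_iff]
  try tauto

lemma acF_of_region_empty {x y c d : ℕ} {S} (h : ∀ p : ℕ × ℕ, p ∉ regionF x y c d) :
    acF x y c d S = {∅} := by
  ext A
  simp only [mem_acF, Finset.mem_singleton]
  constructor
  · rintro ⟨hsub, -, -⟩
    rw [Finset.eq_empty_iff_forall_notMem]
    intro p hp; exact h p (hsub p hp)
  · rintro rfl
    refine ⟨by simp, by simp [IsAntichain, Set.Pairwise], by simp⟩

/-- in an antichain containing `(i,y)` with all second coords `≥ y`,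
every other element is strictly north-east of `(i,y)` -/
lemma rootLeA_iff (p q : ℕ × ℕ) : rootLeA p q ↔ q.1 ≤ p.1 ∧ p.2 ≤ q.2 := Iff.rfl

lemma antichain_aux {A : Finset (ℕ × ℕ)} (hA : IsAntichain rootLeA (A : Set (ℕ × ℕ)))
    {i y : ℕ} (hmem : (i, y) ∈ A) {p : ℕ × ℕ} (hp : p ∈ A) (hne : p ≠ (i, y))
    (hy : y ≤ p.2) : i < p.1 ∧ y < p.2 := by
  have h1 : ¬ rootLeA p (i, y) := hA (by exact_mod_cast hp) (by exact_mod_cast hmem) hne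
  have h2 : ¬ rootLeA (i, y) p := hA (by exact_mod_cast hmem) (by exact_mod_cast hp) (Ne.symm hne)
  simp only [rootLeA_iff] at h1 h2
  simp only [not_and, not_le] at h1 h2
  constructor
  · by_contra h
    exact absurd (h2 (by omega)) (by omega)
  · by_contra h
    exact absurd (h1 (by omega)) (by omega)

lemma card_row_fiber {x y c d i : ℕ} (hx : x < i) (hiy : i ≤ y) (hic : i < c) (hyd : y < d) :
    ((acF x y c d ∅).filter fun A => (i, y) ∈ A).card = (acF i (y+1) c d ∅).card := by
  classical
  refine Finset.card_bij' (fun A _ => A.erase (i, y)) (fun B _ => insert (i, y) B)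
    ?hi ?hj ?left ?right
  case hi =>
    intro A hA
    simp only [Finset.mem_filter, mem_acF] at hA
    obtain ⟨⟨hsub, hanti, -⟩, hmem⟩ := hA
    rw [mem_acF]
    refine ⟨?_, hanti.subset (by simp [Finset.coe_subset]), by simp⟩
    intro p hp
    rw [Finset.mem_erase] at hp
    have hr := hsub p hp.2
    rw [mem_regionF] at hr
    have := antichain_aux hanti hmem hp.2 hp.1 hr.2.2.1
    rw [mem_regionF]
    omega
  case hj =>
    intro B hB
    rw [mem_acF] at hB
    obtain ⟨hsub, hanti, -⟩ := hB
    have hBnot : (i, y) ∉ B := by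
      intro h
      have := hsub _ h; rw [mem_regionF] at this; omega
    simp only [Finset.mem_filter, mem_acF]
    refine ⟨⟨?_, ?_, by simp⟩, Finset.mem_insert_self _ _⟩
    · intro p hp
      rcases Finset.mem_insert.1 hp with rfl | hp
      · rw [mem_regionF]; omega
      · have := hsub p hp; rw [mem_regionF] at this ⊢; omega
    · rw [Finset.coe_insert]
      intro p hp q hq hne
      rcases hp with rfl | hp <;> rcases hq with rfl | hq
      · exact absurd rfl hne
      · have := hsub q hq; rw [mem_regionF] at this
        show ¬ rootLeA _ _
        rw [rootLeA_iff]; simp only [not_and, not_le]; omega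
      · have := hsub p hp; rw [mem_regionF] at this
        show ¬ rootLeA _ _
        rw [rootLeA_iff]; simp only [not_and, not_le]; omega
      · exact hanti hp hq hne
  case left =>
    intro A hA
    simp only [Finset.mem_filter] at hA
    exact Finset.insert_erase hA.2
  case right =>
    intro B hB
    rw [mem_acF] at hB
    apply Finset.erase_insert
    intro h
    have := hB.1 _ h; rw [mem_regionF] at this; omega

lemma acF_split (x y c d : ℕ) (hyd : y < d) (hxc : x < c) :
    (acF x y c d ∅).card = (acF x (y+1) c d ∅).card +
      ∑ i ∈ Finset.Icc (x+1) (c-1), if i ≤ y then (acF i (y+1) c d ∅).card else 0 := by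
  classical
  set T := acF x y c d ∅ with hT
  have hcover : T = T.filter (fun A => ∀ q ∈ A, q.2 ≠ y) ∪
      (Finset.Icc (x+1) (c-1)).biUnion (fun i => T.filter fun A => (i, y) ∈ A) := by
    ext A
    simp only [Finset.mem_union, Finset.mem_biUnion, Finset.mem_filter, Finset.mem_Icc]
    constructor
    · intro hA
      by_cases h : ∀ q ∈ A, q.2 ≠ y
      · exact Or.inl ⟨hA, h⟩
      · push_neg at h
        obtain ⟨q, hq, hqy⟩ := h
        right
        refine ⟨q.1, ?_, hA, ?_⟩
        · have := (mem_acF.1 hA).1 q hq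
          rw [mem_regionF] at this
          omega
        · have : q = (q.1, y) := by rw [← hqy]
          rwa [← this]
    · rintro (⟨h, -⟩ | ⟨i, -, h, -⟩) <;> exact h
  have hdisj : Disjoint (T.filter (fun A => ∀ q ∈ A, q.2 ≠ y))
      ((Finset.Icc (x+1) (c-1)).biUnion (fun i => T.filter fun A => (i, y) ∈ A)) := by
    rw [Finset.disjoint_left]
    intro A hA hA'
    simp only [Finset.mem_filter] at hA
    simp only [Finset.mem_biUnion, Finset.mem_filter] at hA'
    obtain ⟨i, -, -, hmem⟩ := hA'
    exact hA.2 _ hmem rfl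
  rw [hcover, Finset.card_union_of_disjoint hdisj, Finset.card_biUnion]
  · congr 1
    · -- no-row-y part equals acF x (y+1)
      congr 1
      ext A
      simp only [Finset.mem_filter, hT, mem_acF]
      constructor
      · rintro ⟨⟨hsub, ha, -⟩, hrow⟩
        refine ⟨?_, ha, by simp⟩
        intro p hp
        have := hsub p hp; have h2 := hrow p hp
        rw [mem_regionF] at this ⊢; omega
      · rintro ⟨hsub, ha, -⟩
        refine ⟨⟨?_, ha, by simp⟩, ?_⟩
        · intro p hp; have := hsub p hp; rw [mem_regionF] at this ⊢; omega
        · intro q hq; have := hsub q hq; rw [mem_regionF] at this; omega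
    · apply Finset.sum_congr rfl
      intro i hi
      rw [Finset.mem_Icc] at hi
      by_cases hiy : i ≤ y
      · rw [if_pos hiy]
        exact card_row_fiber (by omega) hiy (by omega) hyd
      · rw [if_neg hiy]
        rw [Finset.card_eq_zero, Finset.filter_eq_empty_iff]
        intro A hA
        intro hmem
        have := (mem_acF.1 hA).1 _ hmem
        rw [mem_regionF] at this
        exact hiy (by omega)
  · -- pairwise disjoint fibers
    intro i hi j hj hij
    rw [Function.onFun, Finset.disjoint_left]
    intro A hA hA'
    simp only [Finset.mem_filter] at hA hA'
    have hanti := (mem_acF.1 hA.1).2.1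
    have h := antichain_aux hanti hA.2 hA'.2 (by simp [Prod.ext_iff]; omega) le_rfl
    omega

lemma core : ∀ (N x y c d : ℕ), d - y = N → x ≤ y → x < c → y ≤ d → c ≤ d →
    (acF x y c d ∅).card = latticeCount ((x:ℤ), (y:ℤ)) ((c:ℤ) - 1, (d:ℤ)) := by
  intro N
  induction N with
  | zero =>
    intro x y c d hN hxy hxc hyd hcd
    have hyd' : y = d := by omega
    subst hyd'
    rw [acF_of_region_empty (fun p hp => by rw [mem_regionF] at hp; omega),
      Finset.card_singleton]
    rw [lc_hor ((c:ℤ) - 1 - x).toNat x ((c:ℤ) - 1) y rfl (by omega) (by omega)]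
  | succ N ih =>
    intro x y c d hN hxy hxc hyd hcd
    have hyd' : y < d := by omega
    rw [acF_split x y c d hyd' hxc]
    rw [ih x (y+1) c d (by omega) (by omega) hxc (by omega) hcd]
    have hcast : ((c:ℤ) - 1) = ((c - 1 : ℕ) : ℤ) := by omega
    rw [hcast, lc_unroll (c-1-x) x (c-1) y d rfl (by omega) (by exact_mod_cast hyd')]
    have hsplit : Finset.Icc x (c-1) = insert x (Finset.Icc (x+1) (c-1)) := by
      ext i; simp only [Finset.mem_Icc, Finset.mem_insert]; omega
    rw [hsplit, Finset.sum_insert (by simp), if_pos (by exact_mod_cast hxy)]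
    have e0 : ((y:ℤ) + 1) = ((y + 1 : ℕ) : ℤ) := by push_cast; ring
    rw [e0]
    congr 1
    apply Finset.sum_congr rfl
    intro i hi
    rw [Finset.mem_Icc] at hi
    by_cases hiy : i ≤ y
    · rw [if_pos hiy, if_pos (by exact_mod_cast hiy), ← hcast]
      exact ih i (y+1) c d (by omega) (by omega) (by omega) (by omega) hcd
    · rw [if_neg hiy, if_neg (by exact_mod_cast hiy)]

end S8

namespace S8

lemma antichain_strict {A : Finset (ℕ × ℕ)} (hA : IsAntichain rootLeA (A : Set (ℕ × ℕ)))
    {p q : ℕ × ℕ} (hp : p ∈ A) (hq : q ∈ A) (hne : p ≠ q) (h : p.1 ≤ q.1) :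
    p.1 < q.1 ∧ p.2 < q.2 := by
  have h1 : ¬ rootLeA p q := hA (by exact_mod_cast hp) (by exact_mod_cast hq) hne
  have h2 : ¬ rootLeA q p := hA (by exact_mod_cast hq) (by exact_mod_cast hp) (Ne.symm hne)
  simp only [rootLeA_iff, not_and, not_le] at h1 h2
  omega

lemma decomp (k : ℕ) (ρ : Fin k → ℕ × ℕ) (hinj : Function.Injective ρ)
    (hroot : ∀ m, 1 ≤ (ρ m).1 ∧ (ρ m).1 ≤ (ρ m).2) (c d : ℕ) (hcd : c ≤ d) :
    ((acF 0 1 c d ∅).card : ℤ) =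
      ((acF 0 1 c d (Finset.image ρ Finset.univ)).card : ℤ) +
      ∑ s : Fin k, ((acF 0 1 (ρ s).1 (ρ s).2 (Finset.image ρ Finset.univ)).card : ℤ) *
        (latticeCount (((ρ s).1 : ℤ), ((ρ s).2 : ℤ) + 1) ((c:ℤ) - 1, (d:ℤ)) : ℤ) := by
  classical
  set S := Finset.image ρ Finset.univ with hS
  set T := acF 0 1 c d ∅ with hT
  set Q : Fin k → Finset (Finset (ℕ × ℕ)) := fun s =>
    T.filter (fun A => ρ s ∈ A ∧ ∀ t : Fin k, ρ t ∈ A → (ρ s).1 ≤ (ρ t).1) with hQ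
  have hcover : T = T.filter (fun A => ∀ m : Fin k, ρ m ∉ A) ∪ Finset.univ.biUnion Q := by
    ext A
    simp only [Finset.mem_union, Finset.mem_biUnion, Finset.mem_filter, Finset.mem_univ,
      true_and, hQ]
    constructor
    · intro hA
      by_cases h : ∀ m : Fin k, ρ m ∉ A
      · exact Or.inl ⟨hA, h⟩
      · push_neg at h
        have hne : (Finset.univ.filter (fun t : Fin k => ρ t ∈ A)).Nonempty := by
          obtain ⟨m, hm⟩ := h
          exact ⟨m, by simp [hm]⟩
        obtain ⟨s, hs, hmin⟩ := Finset.exists_min_image _ (fun t => (ρ t).1) hne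
        simp only [Finset.mem_filter, Finset.mem_univ, true_and] at hs hmin
        exact Or.inr ⟨s, hA, hs, fun t ht => hmin t ht⟩
    · rintro (⟨h, -⟩ | ⟨s, h, -⟩) <;> exact h
  have hQdisj : ∀ s ∈ Finset.univ (α := Fin k), ∀ t ∈ Finset.univ (α := Fin k), s ≠ t →
      Disjoint (Q s) (Q t) := by
    intro s _ t _ hst
    rw [Finset.disjoint_left]
    intro A hAs hAt
    simp only [hQ, Finset.mem_filter] at hAs hAt
    obtain ⟨hAT, hs, hsmin⟩ := hAs
    obtain ⟨-, ht, htmin⟩ := hAt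
    have hanti := (mem_acF.1 hAT).2.1
    have hne : ρ s ≠ ρ t := fun h => hst (hinj h)
    have h1 := hsmin t ht
    have := antichain_strict hanti hs ht hne h1
    have := htmin s hs
    omega
  have hdisj : Disjoint (T.filter (fun A => ∀ m : Fin k, ρ m ∉ A)) (Finset.univ.biUnion Q) := by
    rw [Finset.disjoint_left]
    intro A hA hA'
    simp only [Finset.mem_filter] at hA
    simp only [Finset.mem_biUnion, hQ, Finset.mem_filter] at hA'
    obtain ⟨s, -, -, hs, -⟩ := hA'
    exact hA.2 s hs
  have hnone : T.filter (fun A => ∀ m : Fin k, ρ m ∉ A) = acF 0 1 c d S := by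
    ext A
    simp only [Finset.mem_filter, hT, mem_acF, hS]
    constructor
    · rintro ⟨⟨h1, h2, -⟩, h3⟩
      refine ⟨h1, h2, ?_⟩
      intro p hp
      simp only [Finset.mem_image, Finset.mem_univ, true_and] at hp
      obtain ⟨m, rfl⟩ := hp
      exact h3 m
    · rintro ⟨h1, h2, h3⟩
      exact ⟨⟨h1, h2, by simp⟩, fun m => h3 (ρ m) (by simp)⟩
  have hcard : T.card = (acF 0 1 c d S).card + ∑ s : Fin k, (Q s).card := by
    rw [hcover, Finset.card_union_of_disjoint hdisj, hnone, Finset.card_biUnion hQdisj]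
  have hfiber : ∀ s : Fin k, ((Q s).card : ℤ) =
      ((acF 0 1 (ρ s).1 (ρ s).2 S).card : ℤ) *
        (latticeCount (((ρ s).1 : ℤ), ((ρ s).2 : ℤ) + 1) ((c:ℤ) - 1, (d:ℤ)) : ℤ) := by
    intro s
    by_cases hin : (ρ s).1 < c ∧ (ρ s).2 < d
    · -- fiber bijection with product
      have hroots := hroot s
      have hlc : (latticeCount (((ρ s).1 : ℤ), ((ρ s).2 : ℤ) + 1) ((c:ℤ) - 1, (d:ℤ)) : ℤ)
          = ((acF (ρ s).1 ((ρ s).2 + 1) c d ∅).card : ℤ) := by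
        rw [show ((((ρ s).1 : ℤ)), ((ρ s).2 : ℤ) + 1) = ((((ρ s).1 : ℕ) : ℤ),
          ((((ρ s).2 + 1 : ℕ)) : ℤ)) from Prod.ext rfl (by push_cast; ring)]
        rw [core (d - ((ρ s).2 + 1)) (ρ s).1 ((ρ s).2 + 1) c d rfl (by omega)
          (by omega) (by omega) hcd]
      rw [hlc, ← Nat.cast_mul, ← Finset.card_product]
      congr 1
      refine Finset.card_bij' (fun A _ => (A.filter (fun p => p.1 < (ρ s).1),
          A.filter (fun p => (ρ s).1 < p.1)))
        (fun B _ => insert (ρ s) (B.1 ∪ B.2)) ?hi ?hj ?left ?right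
      case hi =>
        intro A hA
        simp only [hQ, Finset.mem_filter, hT] at hA
        obtain ⟨hAT, hmem, hmin⟩ := hA
        rw [mem_acF] at hAT
        obtain ⟨hsub, hanti, -⟩ := hAT
        have hstrict : ∀ p ∈ A, p ≠ ρ s →
            (p.1 < (ρ s).1 ∧ p.2 < (ρ s).2) ∨ ((ρ s).1 < p.1 ∧ (ρ s).2 < p.2) := by
          intro p hp hne
          rcases le_or_gt p.1 (ρ s).1 with h | h
          · exact Or.inl (antichain_strict hanti hp hmem hne h)
          · exact Or.inr (antichain_strict hanti hmem hp (Ne.symm hne) (le_of_lt h))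
        rw [Finset.mem_product]
        constructor
        · rw [mem_acF]
          refine ⟨?_, hanti.subset (Finset.coe_subset.2 (Finset.filter_subset _ _)), ?_⟩
          · intro p hp
            rw [Finset.mem_filter] at hp
            have hr := hsub p hp.1
            rw [mem_regionF] at hr ⊢
            have hne : p ≠ ρ s := by intro h; rw [h] at hp; omega
            rcases hstrict p hp.1 hne with h | h
            · omega
            · omega
          · intro p hp hpA
            rw [Finset.mem_filter] at hpA
            simp only [hS, Finset.mem_image, Finset.mem_univ, true_and] at hp
            obtain ⟨t, rfl⟩ := hp
            have := hmin t hpA.1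
            omega
        · rw [mem_acF]
          refine ⟨?_, hanti.subset (Finset.coe_subset.2 (Finset.filter_subset _ _)), by simp⟩
          intro p hp
          rw [Finset.mem_filter] at hp
          have hr := hsub p hp.1
          rw [mem_regionF] at hr ⊢
          have hne : p ≠ ρ s := by intro h; rw [h] at hp; omega
          rcases hstrict p hp.1 hne with h | h
          · omega
          · omega
      case hj =>
        intro B hB
        rw [Finset.mem_product, mem_acF, mem_acF] at hB
        obtain ⟨⟨hsub1, hanti1, havoid1⟩, ⟨hsub2, hanti2, -⟩⟩ := hB
        have hr1 : ∀ p ∈ B.1, 0 < p.1 ∧ p.1 < (ρ s).1 ∧ 1 ≤ p.2 ∧ p.2 < (ρ s).2 ∧ p.1 ≤ p.2 := by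
          intro p hp; have := hsub1 p hp; rw [mem_regionF] at this; exact this
        have hr2 : ∀ p ∈ B.2, (ρ s).1 < p.1 ∧ p.1 < c ∧ (ρ s).2 + 1 ≤ p.2 ∧ p.2 < d ∧ p.1 ≤ p.2 := by
          intro p hp; have := hsub2 p hp; rw [mem_regionF] at this; exact this
        have hroots := hroot s
        simp only [hQ, Finset.mem_filter, hT]
        refine ⟨?_, Finset.mem_insert_self _ _, ?_⟩
        · rw [mem_acF]
          refine ⟨?_, ?_, by simp⟩
          · intro p hp
            rcases Finset.mem_insert.1 hp with rfl | hp
            · rw [mem_regionF]; omega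
            · rcases Finset.mem_union.1 hp with hp | hp
              · have := hr1 p hp; rw [mem_regionF]; omega
              · have := hr2 p hp; rw [mem_regionF]; omega
          · rw [Finset.coe_insert, Finset.coe_union]
            intro p hp q hq hne
            show ¬ rootLeA p q
            rw [rootLeA_iff, not_and_or, not_le, not_le]
            rcases hp with rfl | hp | hp <;> rcases hq with rfl | hq | hq
            · exact absurd rfl hne
            · have := hr1 q hq; right; omega
            · have := hr2 q hq; left; omega
            · have := hr1 p hp; left; omega
            · have h1 : ¬ rootLeA p q := hanti1 hp hq hne
              rw [rootLeA_iff, not_and_or, not_le, not_le] at h1; exact h1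
            · have := hr1 p hp; have := hr2 q hq; left; omega
            · have := hr2 p hp; right; omega
            · have := hr1 q hq; have := hr2 p hp; right; omega
            · have h1 : ¬ rootLeA p q := hanti2 hp hq hne
              rw [rootLeA_iff, not_and_or, not_le, not_le] at h1; exact h1
        · intro t ht
          rcases Finset.mem_insert.1 ht with heq | ht
          · rw [heq]
          · rcases Finset.mem_union.1 ht with ht | ht
            · exact absurd ht (havoid1 (ρ t) (by simp [hS]))
            · have := hr2 _ ht; omega
      case left =>
        intro A hA
        simp only [hQ, Finset.mem_filter, hT] at hA
        obtain ⟨hAT, hmem, hmin⟩ := hA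
        rw [mem_acF] at hAT
        obtain ⟨hsub, hanti, -⟩ := hAT
        ext p
        simp only [Finset.mem_insert, Finset.mem_union, Finset.mem_filter]
        constructor
        · rintro (rfl | ⟨hp, -⟩ | ⟨hp, -⟩) <;> first | exact hmem | exact hp
        · intro hp
          by_cases hne : p = ρ s
          · exact Or.inl hne
          · rcases le_or_gt p.1 (ρ s).1 with h | h
            · have := antichain_strict hanti hp hmem hne h
              exact Or.inr (Or.inl ⟨hp, this.1⟩)
            · exact Or.inr (Or.inr ⟨hp, h⟩)
      case right =>
        intro B hB
        rw [Finset.mem_product, mem_acF, mem_acF] at hB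
        obtain ⟨⟨hsub1, -, -⟩, ⟨hsub2, -, -⟩⟩ := hB
        have hr1 : ∀ p ∈ B.1, p.1 < (ρ s).1 := by
          intro p hp; have := hsub1 p hp; rw [mem_regionF] at this; omega
        have hr2 : ∀ p ∈ B.2, (ρ s).1 < p.1 := by
          intro p hp; have := hsub2 p hp; rw [mem_regionF] at this; omega
        have e1 : (insert (ρ s) (B.1 ∪ B.2)).filter (fun p => p.1 < (ρ s).1) = B.1 := by
          ext p
          simp only [Finset.mem_filter, Finset.mem_insert, Finset.mem_union]
          constructor
          · rintro ⟨rfl | hp | hp, hlt⟩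
            · omega
            · exact hp
            · exact absurd (hr2 p hp) (by omega)
          · intro hp; exact ⟨Or.inr (Or.inl hp), hr1 p hp⟩
        have e2 : (insert (ρ s) (B.1 ∪ B.2)).filter (fun p => (ρ s).1 < p.1) = B.2 := by
          ext p
          simp only [Finset.mem_filter, Finset.mem_insert, Finset.mem_union]
          constructor
          · rintro ⟨rfl | hp | hp, hlt⟩
            · omega
            · exact absurd (hr1 p hp) (by omega)
            · exact hp
          · intro hp; exact ⟨Or.inr (Or.inr hp), hr2 p hp⟩
        rw [Prod.ext_iff]
        exact ⟨e1, e2⟩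
    · -- empty fiber
      have hQempty : Q s = ∅ := by
        rw [Finset.eq_empty_iff_forall_notMem]
        intro A hA
        simp only [hQ, Finset.mem_filter, hT] at hA
        obtain ⟨hAT, hmem, -⟩ := hA
        have := (mem_acF.1 hAT).1 _ hmem
        rw [mem_regionF] at this
        exact hin ⟨this.2.1, this.2.2.2.1⟩
      have hlc0 : latticeCount (((ρ s).1 : ℤ), ((ρ s).2 : ℤ) + 1) ((c:ℤ) - 1, (d:ℤ)) = 0 := by
        apply lc_zero
        simp only [not_and, not_lt] at hin
        omega
      rw [hQempty, hlc0]
      simp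
  calc (T.card : ℤ) = ((acF 0 1 c d S).card : ℤ) + ∑ s : Fin k, ((Q s).card : ℤ) := by
        rw [hcard]; push_cast; ring
    _ = _ := by rw [Finset.sum_congr rfl (fun s _ => hfiber s)]

end S8

namespace S8

lemma boundary (n : ℕ) {k : ℕ} (ρ : Fin k → ℕ × ℕ) :
    Nat.card {A : Set (ℕ × ℕ) // (∀ p ∈ A, IsRootA n p) ∧ IsAntichain rootLeA A ∧
      ∀ m, ρ m ∉ A} = (acF 0 1 (n+1) (n+1) (Finset.image ρ Finset.univ)).card := by
  classical
  set F := acF 0 1 (n+1) (n+1) (Finset.image ρ Finset.univ) with hF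
  have key : ∀ B : Finset (ℕ × ℕ), B ∈ F ↔ ((∀ p ∈ (B : Set (ℕ × ℕ)), IsRootA n p) ∧
      IsAntichain rootLeA (B : Set (ℕ × ℕ)) ∧ ∀ m, ρ m ∉ B) := by
    intro B
    rw [hF, mem_acF]
    constructor
    · rintro ⟨h1, h2, h3⟩
      refine ⟨?_, h2, fun m => h3 (ρ m) (by simp)⟩
      intro p hp
      have := h1 p (by exact_mod_cast hp)
      rw [mem_regionF] at this
      exact ⟨by omega, by omega, by omega⟩
    · rintro ⟨h1, h2, h3⟩
      refine ⟨?_, h2, ?_⟩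
      · intro p hp
        have := h1 p (by exact_mod_cast hp)
        rw [mem_regionF]
        obtain ⟨a, b, c⟩ := this
        omega
      · intro p hp
        simp only [Finset.mem_image, Finset.mem_univ, true_and] at hp
        obtain ⟨m, rfl⟩ := hp
        exact h3 m
  let f : {B : Finset (ℕ × ℕ) // B ∈ F} → {A : Set (ℕ × ℕ) //
      (∀ p ∈ A, IsRootA n p) ∧ IsAntichain rootLeA A ∧ ∀ m, ρ m ∉ A} :=
    fun B => ⟨(B.1 : Set (ℕ × ℕ)), by
      have := (key B.1).1 B.2
      exact ⟨this.1, this.2.1, fun m hm => this.2.2 m (by exact_mod_cast hm)⟩⟩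
  have hbij : Function.Bijective f := by
    constructor
    · rintro ⟨B1, h1⟩ ⟨B2, h2⟩ h
      simp only [f, Subtype.mk.injEq] at h
      exact Subtype.ext (Finset.coe_injective h)
    · rintro ⟨A, hA1, hA2, hA3⟩
      have hfin : A.Finite := by
        apply Set.Finite.subset (Finset.finite_toSet (regionF 0 1 (n+1) (n+1)))
        intro p hp
        have := hA1 p hp
        rw [Finset.mem_coe, mem_regionF]
        obtain ⟨a, b, c⟩ := this
        omega
      refine ⟨⟨hfin.toFinset, ?_⟩, ?_⟩
      · rw [key]
        rw [Set.Finite.coe_toFinset]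
        refine ⟨hA1, hA2, fun m hm => hA3 m (by rwa [← Set.Finite.mem_toFinset hfin])⟩
      · simp only [f, Subtype.mk.injEq]
        exact Set.Finite.coe_toFinset hfin
  rw [← Nat.card_congr (Equiv.ofBijective f hbij), Nat.card_eq_finsetCard]

end S8


open S8 in
/-- Let `w ∈ S_{n+1}` and let `ρ` enumerate (without repetition) the inversion set
`N(w⁻¹)` of `w⁻¹`, viewed as the set of positive roots `α_{ij}` (with `1 ≤ i ≤ j ≤ n`)
such that `w(i) > w(j+1)` in one-line positions (0-indexed: `w ⟨i-1⟩ > w ⟨j⟩`).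
Then the number of antichains in the type `Aₙ` root poset avoiding all elements of
`N(w⁻¹)` equals the determinant of the `(k+1) × (k+1)` matrix of weakly-above-diagonal
lattice path counts: entry `(r,s)` is `1` if `r = s` and otherwise the number of paths
from `(i_s, j_s + 1)` to `(i_r − 1, j_r)`, the last column counts paths from `(0,1)` to
`(i_r − 1, j_r)`, the last row counts paths from `(i_s, j_s + 1)` to `(n, n+1)`, and the
bottom-right entry counts paths from `(0,1)` to `(n, n+1)`. -/
theorem stmt8 (n k : ℕ) (w : Equiv.Perm (Fin (n + 1))) (ρ : Fin k → ℕ × ℕ)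
    (hinj : Function.Injective ρ)
    (hinv : ∀ p : ℕ × ℕ, (∃ m, ρ m = p) ↔
      IsRootA n p ∧ ∃ (hi : p.1 - 1 < n + 1) (hj : p.2 < n + 1),
        w ⟨p.2, hj⟩ < w ⟨p.1 - 1, hi⟩) :
    (Nat.card {A : Set (ℕ × ℕ) // (∀ p ∈ A, IsRootA n p) ∧ IsAntichain rootLeA A ∧
        ∀ m, ρ m ∉ A} : ℤ) =
      Matrix.det (Matrix.of fun r s : Fin (k + 1) =>
        if hr : (r : ℕ) < k then
          if hs : (s : ℕ) < k then
            if (r : ℕ) = (s : ℕ) then (1 : ℤ)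
            else (latticeCount (((ρ ⟨s, hs⟩).1 : ℤ), ((ρ ⟨s, hs⟩).2 : ℤ) + 1)
              (((ρ ⟨r, hr⟩).1 : ℤ) - 1, ((ρ ⟨r, hr⟩).2 : ℤ)) : ℤ)
          else (latticeCount (0, 1)
            (((ρ ⟨r, hr⟩).1 : ℤ) - 1, ((ρ ⟨r, hr⟩).2 : ℤ)) : ℤ)
        else
          if hs : (s : ℕ) < k then
            (latticeCount (((ρ ⟨s, hs⟩).1 : ℤ), ((ρ ⟨s, hs⟩).2 : ℤ) + 1)
              ((n : ℤ), (n : ℤ) + 1) : ℤ)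
          else (latticeCount (0, 1) ((n : ℤ), (n : ℤ) + 1) : ℤ)) := by
  classical
  have hroot : ∀ m : Fin k, 1 ≤ (ρ m).1 ∧ (ρ m).1 ≤ (ρ m).2 := by
    intro m
    have := ((hinv (ρ m)).1 ⟨m, rfl⟩).1
    exact ⟨this.1, this.2.1⟩
  have hrootn : ∀ m : Fin k, (ρ m).2 ≤ n := fun m => ((hinv (ρ m)).1 ⟨m, rfl⟩).1.2.2
  set S : Finset (ℕ × ℕ) := Finset.image ρ Finset.univ with hS
  set M : Matrix (Fin (k+1)) (Fin (k+1)) ℤ := Matrix.of (fun r s : Fin (k + 1) =>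
        if hr : (r : ℕ) < k then
          if hs : (s : ℕ) < k then
            if (r : ℕ) = (s : ℕ) then (1 : ℤ)
            else (latticeCount (((ρ ⟨s, hs⟩).1 : ℤ), ((ρ ⟨s, hs⟩).2 : ℤ) + 1)
              (((ρ ⟨r, hr⟩).1 : ℤ) - 1, ((ρ ⟨r, hr⟩).2 : ℤ)) : ℤ)
          else (latticeCount (0, 1)
            (((ρ ⟨r, hr⟩).1 : ℤ) - 1, ((ρ ⟨r, hr⟩).2 : ℤ)) : ℤ)
        else
          if hs : (s : ℕ) < k then
            (latticeCount (((ρ ⟨s, hs⟩).1 : ℤ), ((ρ ⟨s, hs⟩).2 : ℤ) + 1)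
              ((n : ℤ), (n : ℤ) + 1) : ℤ)
          else (latticeCount (0, 1) ((n : ℤ), (n : ℤ) + 1) : ℤ)) with hM
  set L : Fin (k+1) := Fin.last k with hL
  have hLval : (L : ℕ) = k := rfl
  have hLlt : ¬ ((L : ℕ) < k) := by omega
  set xs : Fin k → ℤ := fun s => ((acF 0 1 (ρ s).1 (ρ s).2 S).card : ℤ) with hxs
  set xe : ℤ := ((acF 0 1 (n+1) (n+1) S).card : ℤ) with hxe
  set ev : Fin (k+1) → ℤ := fun r => if r = L then 1 else 0 with hev
  set N : Matrix (Fin (k+1)) (Fin (k+1)) ℤ := M.updateCol L ev with hN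
  set cv : Fin (k+1) → ℤ := fun t => if h : (t : ℕ) < k then xs ⟨t, h⟩ else xe with hcv
  -- entry facts
  have hMdiag : ∀ r : Fin (k+1), M r r = 1 ∨ r = L := by
    intro r
    by_cases hr : (r : ℕ) < k
    · left; simp [hM, Matrix.of_apply, dif_pos hr]
    · right; exact Fin.ext (by omega)
  have hMLL : M L L = (latticeCount (0, 1) ((n : ℤ), (n : ℤ) + 1) : ℤ) := by
    simp only [hM, Matrix.of_apply, dif_neg hLlt]
  have hMcast : ∀ (r : Fin (k+1)) (hr : (r : ℕ) < k) (s : Fin k),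
      M r s.castSucc = (if s = ⟨r, hr⟩ then (1 : ℤ) else
        (latticeCount (((ρ s).1 : ℤ), ((ρ s).2 : ℤ) + 1)
          (((ρ ⟨r, hr⟩).1 : ℤ) - 1, ((ρ ⟨r, hr⟩).2 : ℤ)) : ℤ)) := by
    intro r hr s
    have hs : ((s.castSucc : Fin (k+1)) : ℕ) < k := by simp [Fin.coe_castSucc, s.isLt]
    simp only [hM, Matrix.of_apply, dif_pos hr, dif_pos hs]
    have heta : (⟨((s.castSucc : Fin (k+1)) : ℕ), hs⟩ : Fin k) = s := Fin.ext (by simp)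
    rw [heta]
    by_cases h : s = (⟨(r : ℕ), hr⟩ : Fin k)
    · have hc : (r : ℕ) = ((s.castSucc : Fin (k+1)) : ℕ) := by
        rw [h]; simp
      rw [if_pos hc, if_pos h]
    · have hc : ¬ ((r : ℕ) = ((s.castSucc : Fin (k+1)) : ℕ)) := by
        intro hc; apply h; apply Fin.ext; simp at hc ⊢; omega
      rw [if_neg hc, if_neg h]
  have hMLs : ∀ s : Fin k, M L s.castSucc =
      (latticeCount (((ρ s).1 : ℤ), ((ρ s).2 : ℤ) + 1) ((n : ℤ), (n : ℤ) + 1) : ℤ) := by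
    intro s
    have hs : ((s.castSucc : Fin (k+1)) : ℕ) < k := by simp [Fin.coe_castSucc, s.isLt]
    simp only [hM, Matrix.of_apply, dif_neg hLlt, dif_pos hs]
    have heta : (⟨((s.castSucc : Fin (k+1)) : ℕ), hs⟩ : Fin k) = s := Fin.ext (by simp)
    rw [heta]
  have hMrL : ∀ (r : Fin (k+1)) (hr : (r : ℕ) < k),
      M r L = (latticeCount (0, 1) (((ρ ⟨r, hr⟩).1 : ℤ) - 1, ((ρ ⟨r, hr⟩).2 : ℤ)) : ℤ) := by
    intro r hr
    simp only [hM, Matrix.of_apply, dif_pos hr, dif_neg hLlt]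
  -- cast identities
  have epair : ((((0:ℕ)):ℤ), (((1:ℕ)):ℤ)) = ((0:ℤ), (1:ℤ)) := by norm_num
  have epair2 : (((((n+1):ℕ)):ℤ) - 1, ((((n+1):ℕ)):ℤ)) = ((n:ℤ), (n:ℤ)+1) := by
    rw [Prod.ext_iff]; constructor <;> push_cast <;> ring
  -- core applications
  have hcore_end : ((acF 0 1 (n+1) (n+1) (∅ : Finset (ℕ × ℕ))).card : ℤ) =
      (latticeCount (0, 1) ((n:ℤ), (n:ℤ)+1) : ℤ) := by
    rw [core ((n+1) - 1) 0 1 (n+1) (n+1) rfl (by omega) (by omega) (by omega) le_rfl,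
      epair, epair2]
  have hcore_r : ∀ r' : Fin k, ((acF 0 1 (ρ r').1 (ρ r').2 (∅ : Finset (ℕ × ℕ))).card : ℤ) =
      (latticeCount (0, 1) (((ρ r').1 : ℤ) - 1, ((ρ r').2 : ℤ)) : ℤ) := by
    intro r'
    have h := hroot r'
    rw [core ((ρ r').2 - 1) 0 1 (ρ r').1 (ρ r').2 rfl (by omega) (by omega) (by omega)
      (by omega), epair]
  -- column identity
  have colid : ∀ r : Fin (k+1), M r L = ∑ i : Fin (k+1), cv i * N r i := by
    intro r
    have hsum : ∑ i : Fin (k+1), cv i * N r i =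
        (∑ i : Fin k, xs i * M r i.castSucc) + xe * ev r := by
      rw [Fin.sum_univ_castSucc]
      congr 1
      · apply Finset.sum_congr rfl
        intro i _
        have h1 : ((i.castSucc : Fin (k+1)) : ℕ) < k := by simp [i.isLt]
        have h2 : cv i.castSucc = xs i := by
          simp only [hcv, dif_pos h1]
          congr 1
        have h3 : N r i.castSucc = M r i.castSucc := by
          rw [hN, Matrix.updateCol_apply, if_neg]
          exact Fin.ne_of_lt (Fin.castSucc_lt_last i)
        rw [h2, h3]
      · have h2 : cv L = xe := by simp only [hcv, dif_neg hLlt]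
        have h3 : N r L = ev r := by rw [hN, Matrix.updateCol_apply, if_pos rfl]
        rw [h2, h3]
    rw [hsum]
    by_cases hr : (r : ℕ) < k
    · -- r is a proper row
      have hrL : r ≠ L := by intro h; rw [h] at hr; omega
      have hev0 : ev r = 0 := by simp only [hev, if_neg hrL]
      rw [hev0, mul_zero, add_zero, hMrL r hr]
      rw [← hcore_r ⟨r, hr⟩]
      rw [decomp k ρ hinj hroot (ρ (⟨r, hr⟩ : Fin k)).1 (ρ (⟨r, hr⟩ : Fin k)).2
        ((hroot ⟨r, hr⟩).2)]
      have hterm : ∀ s : Fin k, xs s * M r s.castSucc =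
          xs s * (latticeCount (((ρ s).1 : ℤ), ((ρ s).2 : ℤ) + 1)
            (((ρ (⟨r, hr⟩ : Fin k)).1 : ℤ) - 1, ((ρ (⟨r, hr⟩ : Fin k)).2 : ℤ)) : ℤ) +
            (if s = (⟨r, hr⟩ : Fin k) then xs ⟨r, hr⟩ else 0) := by
        intro s
        rw [hMcast r hr s]
        by_cases hsr : s = (⟨r, hr⟩ : Fin k)
        · rw [if_pos hsr, if_pos hsr, hsr]
          have h0 : latticeCount (((ρ (⟨r, hr⟩ : Fin k)).1 : ℤ),
              ((ρ (⟨r, hr⟩ : Fin k)).2 : ℤ) + 1)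
              (((ρ (⟨r, hr⟩ : Fin k)).1 : ℤ) - 1, ((ρ (⟨r, hr⟩ : Fin k)).2 : ℤ)) = 0 :=
            lc_zero (Or.inl (show ((ρ (⟨r, hr⟩ : Fin k)).1 : ℤ) - 1 <
              ((ρ (⟨r, hr⟩ : Fin k)).1 : ℤ) by omega))
          rw [h0]
          push_cast
          ring
        · rw [if_neg hsr, if_neg hsr, add_zero]
      rw [Finset.sum_congr rfl (fun s _ => hterm s), Finset.sum_add_distrib,
        Finset.sum_ite_eq' Finset.univ (⟨r, hr⟩ : Fin k) (fun _ => xs ⟨r, hr⟩),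
        if_pos (Finset.mem_univ (⟨r, hr⟩ : Fin k))]
      simp only [hxs, hS]
      push_cast
      ring
    · -- r = L
      have hrL : r = L := Fin.ext (by omega)
      subst hrL
      have hev1 : ev L = 1 := by simp only [hev, if_pos rfl]
      rw [hev1, mul_one, hMLL, ← hcore_end]
      rw [decomp k ρ hinj hroot (n+1) (n+1) le_rfl]
      rw [epair2]
      simp only [hMLs]
      simp only [hxs, hxe, hS]
      push_cast
      ring
  -- M is N with last column replaced by the linear combination
  have hMN : M = N.updateCol L (fun r => ∑ i : Fin (k+1), cv i • N r i) := by
    apply Matrix.ext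
    intro r s
    rw [Matrix.updateCol_apply]
    by_cases hs : s = L
    · subst hs
      rw [if_pos rfl, colid r]
      simp [smul_eq_mul]
    · rw [if_neg hs, hN, Matrix.updateCol_apply, if_neg hs]
  -- determinant of N is 1
  have hdetN : N.det = 1 := by
    set b : Fin (k+1) → ℕ := fun t => if h : (t : ℕ) < k then
      (n+2) * (ρ ⟨t, h⟩).1 + (ρ ⟨t, h⟩).2 else (n+2)*(n+2) with hb
    have hbound : ∀ h : Fin k, (n+2) * (ρ h).1 + (ρ h).2 < (n+2)*(n+2) := by
      intro h
      have h1 := hroot h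
      have h2 := hrootn h
      have h3 : (n+2) * (ρ h).1 ≤ (n+2) * n := Nat.mul_le_mul_left _ (by omega)
      have h4 : (n+2) * n + (n + 2) + (n+2) = (n+2)*(n+2) := by ring
      omega
    have hzero : ∀ r s : Fin (k+1), b r < b s → N r s = 0 := by
      intro r s hlt
      by_cases hsk : (s : ℕ) < k
      · have hsL : s ≠ L := by intro h; rw [h] at hsk; omega
        rw [hN, Matrix.updateCol_apply, if_neg hsL]
        by_cases hrk : (r : ℕ) < k
        · have hrs : (r : ℕ) ≠ (s : ℕ) := by
            intro h
            rw [hb] at hlt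
            simp only [dif_pos hrk, dif_pos hsk] at hlt
            have : (⟨(r:ℕ), hrk⟩ : Fin k) = ⟨(s:ℕ), hsk⟩ := Fin.ext h
            rw [this] at hlt
            omega
          simp only [hM, Matrix.of_apply, dif_pos hrk, dif_pos hsk, if_neg hrs]
          rw [Nat.cast_eq_zero]
          apply lc_zero
          rw [hb] at hlt
          simp only [dif_pos hrk, dif_pos hsk] at hlt
          by_contra hcon
          push_neg at hcon
          obtain ⟨h1, h2⟩ := hcon
          -- h1 : (ρ s').1 ≤ (ρ r').1 - 1, h2 : (ρ s').2 + 1 ≤ (ρ r').2 over ℤ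
          set rr : Fin k := ⟨(r:ℕ), hrk⟩
          set ss : Fin k := ⟨(s:ℕ), hsk⟩
          have hi : (ρ ss).1 < (ρ rr).1 := by omega
          have hj : (ρ ss).2 < (ρ rr).2 := by omega
          have hm1 : (n+2) * ((ρ ss).1 + 1) ≤ (n+2) * (ρ rr).1 :=
            Nat.mul_le_mul_left _ (by omega)
          have hm2 : (n+2) * ((ρ ss).1 + 1) = (n+2) * (ρ ss).1 + (n+2) := by ring
          have hjs := hrootn ss
          omega
        · -- r = L: impossible since b L is maximal
          have hrL : r = L := Fin.ext (by omega)
          rw [hb] at hlt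
          subst hrL
          simp only [dif_neg hLlt, dif_pos hsk] at hlt
          exact absurd hlt (by have := hbound ⟨(s:ℕ), hsk⟩; omega)
      · -- s = L : column is ev
        have hsL : s = L := Fin.ext (by omega)
        subst hsL
        have hrL : r ≠ L := by
          intro h; subst h; exact absurd hlt (lt_irrefl _)
        rw [hN, Matrix.updateCol_apply, if_pos rfl]
        simp only [hev, if_neg hrL]
    have hbinj : Function.Injective b := by
      intro r s h
      by_cases hrk : (r : ℕ) < k <;> by_cases hsk : (s : ℕ) < k
      · rw [hb] at h
        simp only [dif_pos hrk, dif_pos hsk] at h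
        set rr : Fin k := ⟨(r:ℕ), hrk⟩
        set ss : Fin k := ⟨(s:ℕ), hsk⟩
        have h1 := hroot rr; have h2 := hroot ss
        have h3 := hrootn rr; have h4 := hrootn ss
        have heq : (ρ rr).1 = (ρ ss).1 := by
          by_contra hne
          rcases Nat.lt_or_ge (ρ rr).1 (ρ ss).1 with hlt | hge
          · have := Nat.mul_le_mul_left (n+2) (by omega : (ρ rr).1 + 1 ≤ (ρ ss).1)
            have he : (n+2) * ((ρ rr).1 + 1) = (n+2) * (ρ rr).1 + (n+2) := by ring
            omega
          · have hgt : (ρ ss).1 < (ρ rr).1 := by omega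
            have := Nat.mul_le_mul_left (n+2) (by omega : (ρ ss).1 + 1 ≤ (ρ rr).1)
            have he : (n+2) * ((ρ ss).1 + 1) = (n+2) * (ρ ss).1 + (n+2) := by ring
            omega
        have heq2 : (ρ rr).2 = (ρ ss).2 := by
          rw [heq] at h; omega
        have hrs : rr = ss := hinj (Prod.ext_iff.2 ⟨heq, heq2⟩)
        exact Fin.ext (congrArg (fun z : Fin k => (z : ℕ)) hrs)
      · exfalso
        rw [hb] at h
        simp only [dif_pos hrk, dif_neg hsk] at h
        exact absurd h (by have := hbound ⟨(r:ℕ), hrk⟩; omega)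
      · exfalso
        rw [hb] at h
        simp only [dif_neg hrk, dif_pos hsk] at h
        exact absurd h.symm (by have := hbound ⟨(s:ℕ), hsk⟩; omega)
      · have : (r : ℕ) = k := by omega
        have h2 : (s : ℕ) = k := by omega
        exact Fin.ext (by omega)
    set σ : Equiv.Perm (Fin (k+1)) := Tuple.sort b with hσ
    have hmono : StrictMono (b ∘ σ) :=
      (Tuple.monotone_sort b).strictMono_of_injective (hbinj.comp σ.injective)
    have hdet : (N.submatrix σ σ).det = N.det := Matrix.det_submatrix_equiv_self σ N
    rw [← hdet]
    rw [Matrix.det_of_lowerTriangular]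
    · -- product of diagonal entries is 1
      have hdiag : ∀ t : Fin (k+1), N t t = 1 := by
        intro t
        by_cases ht : t = L
        · subst ht
          rw [hN, Matrix.updateCol_apply, if_pos rfl]
          simp only [hev, if_pos rfl]
        · rw [hN, Matrix.updateCol_apply, if_neg ht]
          rcases hMdiag t with h | h
          · exact h
          · exact absurd h ht
      apply Finset.prod_eq_one
      intro i _
      exact hdiag (σ i)
    · -- block triangular wrt toDual
      intro i j hij
      have hij' : (i : Fin (k+1)) < j := hij
      exact hzero (σ i) (σ j) (hmono hij')
  -- final computation
  have hdetM : M.det = xe := by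
    rw [hMN, Matrix.det_updateCol_sum N L cv]
    have : cv L = xe := by simp only [hcv, dif_neg hLlt]
    rw [this, hdetN, smul_eq_mul, mul_one]
  rw [hdetM, hxe, boundary n ρ, hS]
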